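/- For all x = (x₁,x₂) ∈ ℝ² and y = (y₁,y₂,y₃) ∈ ℝ³, the antisymmetric bilinear bracket on ℝ⁶ with basis e₁,…,e₆ determined by: [e₃,e₅] = (x₁y₂−x₂y₁)e₁ − x₁y₁e₂; [e₃,e₆] = [e₄,e₅] = x₁y₃e₁ − x₂y₁e₂; [e₄,e₆] = x₂y₃e₁ + (x₁y₃−x₂y₂)e₂; [e₁,e₅] = (x₂y₁−x₁y₂)e₃ + x₁y₁e₄; [e₁,e₆] = [e₂,e₅] = −x₁y₃e₃ + x₂y₁e₄; [e₂,e₆] = −x₂y₃e₃ + (x₂y₂−x₁y₃)e₄; [e₁,e₃] = (x₁y₂−x₂y₁)e₅ − x₁y₁e₆; [e₁,e₄] = [e₂,e₃] = x₁y₃e₅ − x₂y₁e₆; [e₂,e₄] = x₂y₃e₅ + (x₁y₃−x₂y₂)e₆; [e₁,e₂] = [e₃,e₄] = [e₅,e₆] = 0, satisfies the Jacobi identity, and hence makes ℝ⁶ into a real Lie algebra (denoted g(x,y)). -/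
import Mathlib


noncomputable section

/-- `Wpair i j v w = vᵢwⱼ − vⱼwᵢ`, the evaluation of `eⁱ∧eʲ` on `(v,w)`. -/
def Wpair (i j : Fin 6) (v w : Fin 6 → ℝ) : ℝ := v i * w j - v j * w i

/-- The antisymmetric bilinear bracket of `g(x,y)` on `ℝ⁶`, determined (in 1-based index
notation) by `[e₃,e₅] = (x₁y₂−x₂y₁)e₁ − x₁y₁e₂`, `[e₃,e₆] = [e₄,e₅] = x₁y₃e₁ − x₂y₁e₂`,
`[e₄,e₆] = x₂y₃e₁ + (x₁y₃−x₂y₂)e₂`, `[e₁,e₅] = (x₂y₁−x₁y₂)e₃ + x₁y₁e₄`,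
`[e₁,e₆] = [e₂,e₅] = −x₁y₃e₃ + x₂y₁e₄`, `[e₂,e₆] = −x₂y₃e₃ + (x₂y₂−x₁y₃)e₄`,
`[e₁,e₃] = (x₁y₂−x₂y₁)e₅ − x₁y₁e₆`, `[e₁,e₄] = [e₂,e₃] = x₁y₃e₅ − x₂y₁e₆`,
`[e₂,e₄] = x₂y₃e₅ + (x₁y₃−x₂y₂)e₆`, `[e₁,e₂] = [e₃,e₄] = [e₅,e₆] = 0`. -/
def brXY (x : Fin 2 → ℝ) (y : Fin 3 → ℝ) (v w : Fin 6 → ℝ) : Fin 6 → ℝ :=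
  ![(x 0 * y 1 - x 1 * y 0) * Wpair 2 4 v w + x 0 * y 2 * (Wpair 2 5 v w + Wpair 3 4 v w) +
      x 1 * y 2 * Wpair 3 5 v w,
    -(x 0 * y 0 * Wpair 2 4 v w) - x 1 * y 0 * (Wpair 2 5 v w + Wpair 3 4 v w) +
      (x 0 * y 2 - x 1 * y 1) * Wpair 3 5 v w,
    (x 1 * y 0 - x 0 * y 1) * Wpair 0 4 v w - x 0 * y 2 * (Wpair 0 5 v w + Wpair 1 4 v w) -
      x 1 * y 2 * Wpair 1 5 v w,
    x 0 * y 0 * Wpair 0 4 v w + x 1 * y 0 * (Wpair 0 5 v w + Wpair 1 4 v w) +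
      (x 1 * y 1 - x 0 * y 2) * Wpair 1 5 v w,
    (x 0 * y 1 - x 1 * y 0) * Wpair 0 2 v w + x 0 * y 2 * (Wpair 0 3 v w + Wpair 1 2 v w) +
      x 1 * y 2 * Wpair 1 3 v w,
    -(x 0 * y 0 * Wpair 0 2 v w) - x 1 * y 0 * (Wpair 0 3 v w + Wpair 1 2 v w) +
      (x 0 * y 2 - x 1 * y 1) * Wpair 1 3 v w]

lemma br0 (x : Fin 2 → ℝ) (y : Fin 3 → ℝ) (v w : Fin 6 → ℝ) : brXY x y v w 0 =
    (x 0 * y 1 - x 1 * y 0) * Wpair 2 4 v w + x 0 * y 2 * (Wpair 2 5 v w + Wpair 3 4 v w) +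
      x 1 * y 2 * Wpair 3 5 v w := rfl
lemma br1 (x : Fin 2 → ℝ) (y : Fin 3 → ℝ) (v w : Fin 6 → ℝ) : brXY x y v w 1 =
    -(x 0 * y 0 * Wpair 2 4 v w) - x 1 * y 0 * (Wpair 2 5 v w + Wpair 3 4 v w) +
      (x 0 * y 2 - x 1 * y 1) * Wpair 3 5 v w := rfl
lemma br2 (x : Fin 2 → ℝ) (y : Fin 3 → ℝ) (v w : Fin 6 → ℝ) : brXY x y v w 2 =
    (x 1 * y 0 - x 0 * y 1) * Wpair 0 4 v w - x 0 * y 2 * (Wpair 0 5 v w + Wpair 1 4 v w) -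
      x 1 * y 2 * Wpair 1 5 v w := rfl
lemma br3 (x : Fin 2 → ℝ) (y : Fin 3 → ℝ) (v w : Fin 6 → ℝ) : brXY x y v w 3 =
    x 0 * y 0 * Wpair 0 4 v w + x 1 * y 0 * (Wpair 0 5 v w + Wpair 1 4 v w) +
      (x 1 * y 1 - x 0 * y 2) * Wpair 1 5 v w := rfl
lemma br4 (x : Fin 2 → ℝ) (y : Fin 3 → ℝ) (v w : Fin 6 → ℝ) : brXY x y v w 4 =
    (x 0 * y 1 - x 1 * y 0) * Wpair 0 2 v w + x 0 * y 2 * (Wpair 0 3 v w + Wpair 1 2 v w) +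
      x 1 * y 2 * Wpair 1 3 v w := rfl
lemma br5 (x : Fin 2 → ℝ) (y : Fin 3 → ℝ) (v w : Fin 6 → ℝ) : brXY x y v w 5 =
    -(x 0 * y 0 * Wpair 0 2 v w) - x 1 * y 0 * (Wpair 0 3 v w + Wpair 1 2 v w) +
      (x 0 * y 2 - x 1 * y 1) * Wpair 1 3 v w := rfl


set_option maxHeartbeats 1000000 in
lemma jac0 (x : Fin 2 → ℝ) (y : Fin 3 → ℝ) (u v w : Fin 6 → ℝ) :
    brXY x y (brXY x y u v) w 0 + brXY x y (brXY x y v w) u 0 + brXY x y (brXY x y w u) v 0 = 0 := by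
  simp only [br0, br1, br2, br3, br4, br5, Wpair]; ring

set_option maxHeartbeats 1000000 in
lemma jac1 (x : Fin 2 → ℝ) (y : Fin 3 → ℝ) (u v w : Fin 6 → ℝ) :
    brXY x y (brXY x y u v) w 1 + brXY x y (brXY x y v w) u 1 + brXY x y (brXY x y w u) v 1 = 0 := by
  simp only [br0, br1, br2, br3, br4, br5, Wpair]; ring

set_option maxHeartbeats 1000000 in
lemma jac2 (x : Fin 2 → ℝ) (y : Fin 3 → ℝ) (u v w : Fin 6 → ℝ) :
    brXY x y (brXY x y u v) w 2 + brXY x y (brXY x y v w) u 2 + brXY x y (brXY x y w u) v 2 = 0 := by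
  simp only [br0, br1, br2, br3, br4, br5, Wpair]; ring

set_option maxHeartbeats 1000000 in
lemma jac3 (x : Fin 2 → ℝ) (y : Fin 3 → ℝ) (u v w : Fin 6 → ℝ) :
    brXY x y (brXY x y u v) w 3 + brXY x y (brXY x y v w) u 3 + brXY x y (brXY x y w u) v 3 = 0 := by
  simp only [br0, br1, br2, br3, br4, br5, Wpair]; ring

set_option maxHeartbeats 1000000 in
lemma jac4 (x : Fin 2 → ℝ) (y : Fin 3 → ℝ) (u v w : Fin 6 → ℝ) :
    brXY x y (brXY x y u v) w 4 + brXY x y (brXY x y v w) u 4 + brXY x y (brXY x y w u) v 4 = 0 := by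
  simp only [br0, br1, br2, br3, br4, br5, Wpair]; ring

set_option maxHeartbeats 1000000 in
lemma jac5 (x : Fin 2 → ℝ) (y : Fin 3 → ℝ) (u v w : Fin 6 → ℝ) :
    brXY x y (brXY x y u v) w 5 + brXY x y (brXY x y v w) u 5 + brXY x y (brXY x y w u) v 5 = 0 := by
  simp only [br0, br1, br2, br3, br4, br5, Wpair]; ring

/-- The bracket of `g(x,y)` always satisfies the Jacobi identity. -/
theorem stmt2 (x : Fin 2 → ℝ) (y : Fin 3 → ℝ) (u v w : Fin 6 → ℝ) :
    brXY x y (brXY x y u v) w + brXY x y (brXY x y v w) u + brXY x y (brXY x y w u) v = 0 := by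
  funext i
  fin_cases i
  exacts [jac0 x y u v w, jac1 x y u v w, jac2 x y u v w, jac3 x y u v w, jac4 x y u v w,
    jac5 x y u v w]
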